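/- For the abrupt-breaks AR(2) with r breaks, the determinant ξ_{t,k} of the k×k block tridiagonal matrix decomposes as ξ_{t,k} = Σ over (i₁,...,i_r) ∈ {0,1}^r of ξ_{t,k₁−i₁} · Π_{j=2}^{r} φ_{2,j-1}^{i_{j-1}} ξ_{t−k_{j-1}−i_{j-1}, k_j−k_{j-1}−i_j−i_{j-1}} · φ_{2,r}^{i_r} ξ_{t−k_r−i_r, k−k_r−i_r}, where each within-regime ξ is a determinant of a constant-coefficient tridiagonal matrix. -/

import Mathlib

open Finset
set_option maxHeartbeats 1600000


lemma xi_split (φ₁ φ₂ : ℤ → ℝ) (ξ : ℤ → ℤ → ℝ)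
    (hξ0 : ∀ t, ξ t 0 = 1) (hξm1 : ∀ t, ξ t (-1) = 0)
    (hξrec : ∀ t i : ℤ, 1 ≤ i →
      ξ t i = φ₁ t * ξ (t - 1) (i - 1) + φ₂ t * ξ (t - 2) (i - 2)) :
    ∀ (m : ℕ) (t n : ℤ), (m : ℤ) ≤ n →
      ξ t n = ξ t m * ξ (t - m) (n - m)
        + φ₂ (t - m + 1) * ξ t ((m : ℤ) - 1) * ξ (t - m - 1) (n - m - 1) := by
  intro m
  induction m using Nat.strong_induction_on with
  | _ m IH =>
    match m with
    | 0 => intro t n h; norm_num [hξ0, hξm1]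
    | 1 =>
      intro t n h
      push_cast at h ⊢
      have h1 := hξrec t n (by omega)
      have h2 := hξrec t 1 le_rfl
      norm_num [hξ0, hξm1] at h2 ⊢
      rw [h1, h2]
      ring_nf
    | (m+2) =>
      intro t n h
      push_cast at h ⊢
      have h1 := hξrec t n (by omega)
      have hA := IH (m+1) (by omega) (t-1) (n-1) (by push_cast; omega)
      have hB := IH m (by omega) (t-2) (n-2) (by push_cast; omega)
      have h2 := hξrec t ((m:ℤ)+2) (by omega)
      have h3 := hξrec t ((m:ℤ)+1) (by omega)
      push_cast at hA hB
      ring_nf at h1 hA hB h2 h3 ⊢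
      linear_combination h1 + φ₁ t * hA + φ₂ t * hB
        - ξ (-2 + t - (m:ℤ)) (-2 + n - (m:ℤ)) * h2
        - φ₂ (-1 + t - (m:ℤ)) * ξ (-3 + t - (m:ℤ)) (-3 + n - (m:ℤ)) * h3



noncomputable def Esummand (φ₂ : ℤ → ℝ) (ξ : ℤ → ℤ → ℝ) (t k : ℤ) (K : ℕ → ℤ)
    (r : ℕ) (b : ℕ → ℤ) : ℝ :=
  ξ t (K 1 - b 0)
    * (∏ j ∈ Finset.Ico 2 (r + 1),
        (if b (j - 2) = 0 then (1 : ℝ) else φ₂ (t - K (j - 1) + 1))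
          * ξ (t - K (j - 1) - b (j - 2)) (K j - K (j - 1) - b (j - 1) - b (j - 2)))
    * (if b (r - 1) = 0 then (1 : ℝ) else φ₂ (t - K r + 1))
    * ξ (t - K r - b (r - 1)) (k - K r - b (r - 1))

lemma Esummand_step (φ₂ : ℤ → ℝ) (ξ : ℤ → ℤ → ℝ) (t k : ℤ) (K : ℕ → ℤ)
    (r : ℕ) (hr : 1 ≤ r) (i₀ : ℤ) (b : ℕ → ℤ) :
    Esummand φ₂ ξ t k K (r + 1) (fun j => if j = 0 then i₀ else b (j - 1))
      = ξ t (K 1 - i₀) * (if i₀ = 0 then (1 : ℝ) else φ₂ (t - K 1 + 1))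
        * Esummand φ₂ ξ (t - K 1 - i₀) (k - K 1 - i₀) (fun j => K (j + 1) - K 1 - i₀) r b := by
  unfold Esummand
  rw [Finset.prod_eq_prod_Ico_succ_bot (by omega : 2 < r + 2)]
  rw [show r + 2 = r + 1 + 1 from rfl, ← Finset.prod_Ico_add']
  have hP : (∏ j ∈ Finset.Ico 2 (r + 1),
      ((if (fun j => if j = 0 then i₀ else b (j - 1)) (j + 1 - 2) = 0 then (1:ℝ)
          else φ₂ (t - K (j + 1 - 1) + 1)) *
        ξ (t - K (j + 1 - 1) - (fun j => if j = 0 then i₀ else b (j - 1)) (j + 1 - 2))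
          (K (j + 1) - K (j + 1 - 1) - (fun j => if j = 0 then i₀ else b (j - 1)) (j + 1 - 1)
            - (fun j => if j = 0 then i₀ else b (j - 1)) (j + 1 - 2))))
    = ∏ j ∈ Finset.Ico 2 (r + 1),
      ((if b (j - 2) = 0 then (1:ℝ) else φ₂ (t - K 1 - i₀ - (fun j => K (j + 1) - K 1 - i₀) (j - 1) + 1)) *
        ξ (t - K 1 - i₀ - (fun j => K (j + 1) - K 1 - i₀) (j - 1) - b (j - 2))
          ((fun j => K (j + 1) - K 1 - i₀) j - (fun j => K (j + 1) - K 1 - i₀) (j - 1) - b (j - 1)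
            - b (j - 2))) := by
    refine Finset.prod_congr rfl (fun j hj => ?_)
    simp only [Finset.mem_Ico] at hj
    simp only [show j + 1 - 2 = j - 1 from by omega, show j + 1 - 1 = j from by omega,
      show j - 1 + 1 = j from by omega, show j - 1 - 1 = j - 2 from by omega,
      if_neg (show ¬(j - 1 = 0) from by omega), if_neg (show ¬(j = 0) from by omega)]
    ring_nf
  rw [hP]
  generalize (∏ j ∈ Finset.Ico 2 (r + 1),
      ((if b (j - 2) = 0 then (1:ℝ) else φ₂ (t - K 1 - i₀ - (fun j => K (j + 1) - K 1 - i₀) (j - 1) + 1)) *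
        ξ (t - K 1 - i₀ - (fun j => K (j + 1) - K 1 - i₀) (j - 1) - b (j - 2))
          ((fun j => K (j + 1) - K 1 - i₀) j - (fun j => K (j + 1) - K 1 - i₀) (j - 1) - b (j - 1)
            - b (j - 2)))) = P
  simp only [show (2:ℕ) - 2 = 0 from rfl, show (2:ℕ) - 1 = 1 from rfl,
    show r + 1 - 1 = r from rfl, if_pos rfl, if_neg (show ¬((1:ℕ) = 0) from by omega),
    if_neg (show ¬(r = 0) from by omega), show (1:ℕ) - 1 = 0 from rfl]
  norm_num
  split_ifs <;> ring

noncomputable def bOf (r : ℕ) (c : Fin r → Fin 2) : ℕ → ℤ :=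
  fun j => if h : j < r then ((c ⟨j, h⟩ : ℕ) : ℤ) else 0

lemma bOf_cons (r : ℕ) (i₀ : Fin 2) (c : Fin r → Fin 2) :
    bOf (r + 1) (Fin.cons i₀ c) = fun j => if j = 0 then ((i₀ : ℕ) : ℤ) else bOf r c (j - 1) := by
  funext j
  cases j with
  | zero => simp [bOf]
  | succ m =>
    simp only [bOf, Nat.succ_ne_zero, if_false, Nat.add_sub_cancel]
    by_cases h : m < r
    · rw [dif_pos (by omega : m + 1 < r + 1), dif_pos h]
      rw [show (⟨m + 1, by omega⟩ : Fin (r + 1)) = Fin.succ ⟨m, h⟩ from rfl, Fin.cons_succ]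
    · rw [dif_neg (by omega), dif_neg h]

lemma K_chain (K : ℕ → ℤ) : ∀ (R : ℕ), (∀ j, 1 ≤ j → j ≤ R → K j < K (j + 1)) →
    K 1 ≤ K (R + 1) := by
  intro R
  induction R with
  | zero => intro _; exact le_refl _
  | succ R IH =>
    intro h
    exact le_trans (IH (fun j h1 h2 => h j h1 (by omega))) (h (R + 1) (by omega) le_rfl).le

lemma aux_sum (φ₂ : ℤ → ℝ) (ξ : ℤ → ℤ → ℝ)
    (hsplit : ∀ (t m n : ℤ), 0 ≤ m → m ≤ n →
      ξ t n = ξ t m * ξ (t - m) (n - m)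
        + φ₂ (t - m + 1) * ξ t (m - 1) * ξ (t - m - 1) (n - m - 1)) :
    ∀ (r : ℕ), 1 ≤ r → ∀ (t k : ℤ) (K : ℕ → ℤ), 0 ≤ K 1 → K (r + 1) = k →
      (∀ j : ℕ, 1 ≤ j → j ≤ r → K j < K (j + 1)) →
      ξ t k = ∑ c : Fin r → Fin 2, Esummand φ₂ ξ t k K r (bOf r c) := by
  intro r hr
  induction r, hr using Nat.le_induction with
  | base =>
    intro t k K hK1 hKend hmono
    rw [Fintype.sum_equiv (Equiv.funUnique (Fin 1) (Fin 2)).symm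
      (fun i => Esummand φ₂ ξ t k K 1 (bOf 1 ((Equiv.funUnique (Fin 1) (Fin 2)).symm i)))
      (fun c => Esummand φ₂ ξ t k K 1 (bOf 1 c)) (fun i => rfl) |>.symm]
    rw [Fin.sum_univ_two]
    have hs := hsplit t (K 1) k hK1 (by have := hmono 1 le_rfl le_rfl; omega)
    rw [hs]
    unfold Esummand bOf
    norm_num
    exact Or.inl (mul_comm _ _)
  | succ r hr IH =>
    intro t k K hK1 hKend hmono
    have hK1k : K 1 ≤ k := by
      rw [← hKend]; exact K_chain K (r + 1) (fun j h1 h2 => hmono j h1 h2)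
    have hIH : ∀ i₀ : Fin 2, ξ (t - K 1 - ((i₀ : ℕ) : ℤ)) (k - K 1 - ((i₀ : ℕ) : ℤ))
        = ∑ c : Fin r → Fin 2, Esummand φ₂ ξ (t - K 1 - ((i₀ : ℕ) : ℤ))
            (k - K 1 - ((i₀ : ℕ) : ℤ)) (fun j => K (j + 1) - K 1 - ((i₀ : ℕ) : ℤ)) r (bOf r c) := by
      intro i₀
      apply IH
      · have h1 := hmono 1 (by omega) (by omega)
        have h2 : ((i₀ : ℕ) : ℤ) ≤ 1 := by exact_mod_cast Nat.le_of_lt_succ i₀.isLt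
        linarith
      · rw [hKend]
      · intro j h1 h2
        have := hmono (j + 1) (by omega) (by omega)
        linarith
    have e1 : ∑ c : Fin (r + 1) → Fin 2, Esummand φ₂ ξ t k K (r + 1) (bOf (r + 1) c)
        = ∑ p : Fin 2 × (Fin r → Fin 2),
            Esummand φ₂ ξ t k K (r + 1) (bOf (r + 1) (Fin.cons p.1 p.2)) :=
      (Fintype.sum_equiv (Fin.consEquiv (fun _ : Fin (r + 1) => Fin 2)) _ _ (fun p => rfl)).symm
    rw [e1, Fintype.sum_prod_type]
    have e2 : ∀ (i₀ : Fin 2) (c : Fin r → Fin 2),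
        Esummand φ₂ ξ t k K (r + 1) (bOf (r + 1) (Fin.cons i₀ c))
          = ξ t (K 1 - ((i₀ : ℕ) : ℤ))
            * (if ((i₀ : ℕ) : ℤ) = 0 then (1 : ℝ) else φ₂ (t - K 1 + 1))
            * Esummand φ₂ ξ (t - K 1 - ((i₀ : ℕ) : ℤ)) (k - K 1 - ((i₀ : ℕ) : ℤ))
              (fun j => K (j + 1) - K 1 - ((i₀ : ℕ) : ℤ)) r (bOf r c) := by
      intro i₀ c
      rw [bOf_cons]
      exact Esummand_step φ₂ ξ t k K r hr _ _
    calc ξ t k = ξ t (K 1) * ξ (t - K 1) (k - K 1)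
          + φ₂ (t - K 1 + 1) * ξ t (K 1 - 1) * ξ (t - K 1 - 1) (k - K 1 - 1) :=
        hsplit t (K 1) k hK1 hK1k
      _ = ∑ i₀ : Fin 2, ξ t (K 1 - ((i₀ : ℕ) : ℤ))
            * (if ((i₀ : ℕ) : ℤ) = 0 then (1 : ℝ) else φ₂ (t - K 1 + 1))
            * ξ (t - K 1 - ((i₀ : ℕ) : ℤ)) (k - K 1 - ((i₀ : ℕ) : ℤ)) := by
          rw [Fin.sum_univ_two]
          norm_num
          exact Or.inl (mul_comm _ _)
      _ = _ := by
          refine Finset.sum_congr rfl (fun i₀ _ => ?_)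
          rw [hIH i₀, Finset.mul_sum]
          exact Finset.sum_congr rfl (fun c _ => (e2 i₀ c).symm)


/-- Eq. (B.8) of the paper: for the abrupt-breaks AR(2) with `r ≥ 1` breaks at
times `t-k₁ < … < t-k_r` (with `0 = k₀ < k₁ < … < k_r < k_{r+1} = k`), the
Green-function determinant decomposes as a sum over `(i₁,…,i_r) ∈ {0,1}^r`:
`ξ_{t,k} = Σ ξ_{t,k₁−i₁} · (Π_{j=2}^{r} φ_{2,j-1}^{i_{j-1}}
  ξ_{t−k_{j-1}−i_{j-1}, k_j−k_{j-1}−i_j−i_{j-1}}) · φ_{2,r}^{i_r}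
  ξ_{t−k_r−i_r, k−k_r−i_r}`,
where `φ_{2,j}^{i_j}` denotes the factor `1` if `i_j = 0` and `φ₂(t−k_j+1)` if
`i_j = 1`. -/
theorem abrupt_breaks_xi_decomposition
    (φ₁ φ₂ : ℤ → ℝ) (ξ : ℤ → ℤ → ℝ)
    (hξ0 : ∀ t, ξ t 0 = 1) (hξm1 : ∀ t, ξ t (-1) = 0)
    (hξrec : ∀ t i : ℤ, 1 ≤ i →
      ξ t i = φ₁ t * ξ (t - 1) (i - 1) + φ₂ t * ξ (t - 2) (i - 2))
    (t : ℤ) (k : ℤ) (r : ℕ) (hr : 1 ≤ r) (K : ℕ → ℤ)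
    (hK0 : K 0 = 0) (hKend : K (r + 1) = k)
    (hKmono : ∀ j : ℕ, j ≤ r → K j < K (j + 1)) :
    ξ t k =
      ∑ c : Fin r → Fin 2,
        (ξ t (K 1 - ((c ⟨0, by omega⟩ : ℕ) : ℤ)))
          * (∏ j ∈ Finset.Ico 2 (r + 1),
              (if h : 2 ≤ j ∧ j ≤ r + 1 then
                (if c ⟨j - 2, by omega⟩ = 0 then (1 : ℝ)
                  else φ₂ (t - K (j - 1) + 1))
                * ξ (t - K (j - 1) - ((c ⟨j - 2, by omega⟩ : ℕ) : ℤ))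
                    (K j - K (j - 1) - (if h2 : j ≤ r then ((c ⟨j - 1, by omega⟩ : ℕ) : ℤ) else 0)
                      - ((c ⟨j - 2, by omega⟩ : ℕ) : ℤ))
              else 1))
          * (if c ⟨r - 1, by omega⟩ = 0 then (1 : ℝ) else φ₂ (t - K r + 1))
          * ξ (t - K r - ((c ⟨r - 1, by omega⟩ : ℕ) : ℤ))
              (k - K r - ((c ⟨r - 1, by omega⟩ : ℕ) : ℤ)) := by
  have hsplit : ∀ (t m n : ℤ), 0 ≤ m → m ≤ n →
      ξ t n = ξ t m * ξ (t - m) (n - m)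
        + φ₂ (t - m + 1) * ξ t (m - 1) * ξ (t - m - 1) (n - m - 1) := by
    intro t m n hm hmn
    lift m to ℕ using hm
    exact xi_split φ₁ φ₂ ξ hξ0 hξm1 hξrec m t n hmn
  rw [aux_sum φ₂ ξ hsplit r hr t k K
    (by rw [← hK0]; exact (hKmono 0 (by omega)).le) hKend (fun j h1 h2 => hKmono j h2)]
  refine Finset.sum_congr rfl (fun c _ => ?_)
  have hval : ∀ x : Fin 2, ((((x : ℕ) : ℤ) = 0) ↔ (x = 0)) := by
    intro x; fin_cases x <;> simp
  simp only [Esummand, bOf]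
  refine congrArg₂ (· * ·) (congrArg₂ (· * ·) (congrArg₂ (· * ·) ?_ ?_) ?_) ?_
  · rw [dif_pos (show 0 < r by omega)]
  · refine Finset.prod_congr rfl (fun j hj => ?_)
    simp only [Finset.mem_Ico] at hj
    rw [dif_pos (show 2 ≤ j ∧ j ≤ r + 1 by omega), dif_pos (show j ≤ r by omega)]
    simp only [dif_pos (show j - 2 < r by omega), dif_pos (show j - 1 < r by omega), hval]
  · simp only [dif_pos (show r - 1 < r by omega), hval]
  · simp only [dif_pos (show r - 1 < r by omega)]
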